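/- Let a, b, c ∈ ℝ with a ≠ 0, b ≠ 0, c ≠ 0 and h > 0, and let Φ_s = e^{ah}·I_N + (c/a)(e^{ah} − 1)·W, Ψ_s = (b/a)(e^{ah} − 1)·Δ. If the pair (W, Δ) satisfies the PBH condition, then the pair (Φ_s, Ψ_s) is controllable. -/

import Mathlib

open Matrix
open scoped Kronecker

/-- Entrywise complexification of a real matrix. -/
noncomputable def cpx {a b : Type*} (M : Matrix a b ℝ) : Matrix a b ℂ :=
  M.map (Complex.ofReal)

/-- The matrix exponential `e^{M}`. -/
noncomputable def mexp {q : Type*} [Fintype q] [DecidableEq q]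
    (M : Matrix q q ℝ) : Matrix q q ℝ :=
  NormedSpace.exp M

/-- The entrywise integral `∫₀ʰ e^{Aτ} dτ`. -/
noncomputable def intExp {q : Type*} [Fintype q] [DecidableEq q]
    (A : Matrix q q ℝ) (h : ℝ) : Matrix q q ℝ :=
  Matrix.of fun i j => ∫ τ in (0:ℝ)..h, (NormedSpace.exp (τ • A)) i j

/-- `θ` is an eigenvalue of the complex square matrix `M`. -/
def IsEig {q : Type*} [Fintype q] [DecidableEq q] (M : Matrix q q ℂ) (θ : ℂ) : Prop :=
  (θ • (1 : Matrix q q ℂ) - M).det = 0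

/-- PBH condition for a pair of complex matrices: for every `s ∈ ℂ`, the only row
vector `v` with `v (sI - M) = 0` and `v G = 0` is `v = 0`. -/
def PBH {q r : Type*} [Fintype q] [DecidableEq q] [Fintype r]
    (M : Matrix q q ℂ) (G : Matrix q r ℂ) : Prop :=
  ∀ (s : ℂ) (v : q → ℂ), v ᵥ* (s • (1 : Matrix q q ℂ) - M) = 0 → v ᵥ* G = 0 → v = 0

/-- Controllability of a discrete-time linear system `x⁺ = F x + G u`:
every state can be steered to the origin in finitely many steps. -/
def Controllable {q r : Type*} [Fintype q] [DecidableEq q] [Fintype r]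
    (F : Matrix q q ℝ) (G : Matrix q r ℝ) : Prop :=
  ∀ x : q → ℝ, ∃ (k : ℕ) (u : Fin k → r → ℝ),
    (F ^ k) *ᵥ x + ∑ j : Fin k, (F ^ (k - 1 - (j : ℕ))) *ᵥ (G *ᵥ u j) = 0

/-- `𝓑(h) = (∫₀ʰ e^{Aτ} dτ)·B`. -/
noncomputable def sampB {n p : ℕ} (A : Matrix (Fin n) (Fin n) ℝ)
    (B : Matrix (Fin n) (Fin p) ℝ) (h : ℝ) : Matrix (Fin n) (Fin p) ℝ :=
  intExp A h * B

/-- `𝓗(h) = (∫₀ʰ e^{Aτ} dτ)·H·C`. -/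
noncomputable def sampH {n m : ℕ} (A : Matrix (Fin n) (Fin n) ℝ)
    (H : Matrix (Fin n) (Fin m) ℝ) (C : Matrix (Fin m) (Fin n) ℝ) (h : ℝ) :
    Matrix (Fin n) (Fin n) ℝ :=
  intExp A h * H * C

/-- `Φ_s = I_N ⊗ e^{Ah} + W ⊗ 𝓗(h)`. -/
noncomputable def Phis {n m N : ℕ} (A : Matrix (Fin n) (Fin n) ℝ)
    (H : Matrix (Fin n) (Fin m) ℝ) (C : Matrix (Fin m) (Fin n) ℝ)
    (W : Matrix (Fin N) (Fin N) ℝ) (h : ℝ) :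
    Matrix (Fin N × Fin n) (Fin N × Fin n) ℝ :=
  (1 : Matrix (Fin N) (Fin N) ℝ) ⊗ₖ mexp (h • A) + W ⊗ₖ sampH A H C h

/-- `E_λ = e^{Ah} + λ·𝓗(h)` (complexified). -/
noncomputable def Emat {n m : ℕ} (A : Matrix (Fin n) (Fin n) ℝ)
    (H : Matrix (Fin n) (Fin m) ℝ) (C : Matrix (Fin m) (Fin n) ℝ)
    (h : ℝ) (lam : ℂ) : Matrix (Fin n) (Fin n) ℂ :=
  cpx (mexp (h • A)) + lam • cpx (sampH A H C h)

lemma cpx_mul {a b c : Type*} [Fintype b] (M : Matrix a b ℝ) (P : Matrix b c ℝ) :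
    cpx (M * P) = cpx M * cpx P := by
  have : (Complex.ofReal : ℝ → ℂ) = ⇑Complex.ofRealHom := rfl
  simp only [cpx, this, Matrix.map_mul]

lemma cpx_pow {a : Type*} [Fintype a] [DecidableEq a] (M : Matrix a a ℝ) (i : ℕ) :
    cpx (M ^ i) = cpx M ^ i := by
  induction i with
  | zero => ext x y; simp [cpx, Matrix.one_apply, apply_ite]
  | succ n ih => rw [pow_succ, pow_succ, cpx_mul, ih]

lemma cpx_vecMul {a b : Type*} [Fintype a] (v : a → ℝ) (M : Matrix a b ℝ) :
    (fun i => ((v i : ℂ))) ᵥ* cpx M = fun j => ((v ᵥ* M) j : ℂ) := by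
  funext j
  simp [Matrix.vecMul, dotProduct, cpx]

lemma kernel_trivial_cpx {N r : ℕ} (F : Matrix (Fin N) (Fin N) ℂ)
    (G : Matrix (Fin N) (Fin r) ℂ) (hPBH : PBH F G)
    (v : Fin N → ℂ) (hv : ∀ i : ℕ, v ᵥ* (F ^ i * G) = 0) : v = 0 := by
  by_contra hv0
  set U : Submodule ℂ (Fin N → ℂ) :=
    ⨅ (i : ℕ), LinearMap.ker (Matrix.vecMulLinear (F ^ i * G)) with hU
  have memU : ∀ w : Fin N → ℂ, w ∈ U ↔ ∀ i : ℕ, w ᵥ* (F ^ i * G) = 0 := by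
    intro w
    simp [hU, Submodule.mem_iInf, Matrix.vecMulLinear_apply]
  have hinv : ∀ w ∈ U, (Matrix.vecMulLinear F) w ∈ U := by
    intro w hw
    rw [memU] at hw ⊢
    intro i
    rw [Matrix.vecMulLinear_apply, Matrix.vecMul_vecMul, ← Matrix.mul_assoc,
      ← pow_succ', hw]
  haveI : Nontrivial U := ⟨⟨⟨v, (memU v).2 hv⟩, 0, by
    simp only [ne_eq, Submodule.mk_eq_zero]; exact hv0⟩⟩
  obtain ⟨s, hs⟩ := Module.End.exists_eigenvalue ((Matrix.vecMulLinear F).restrict hinv)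
  obtain ⟨u, hu⟩ := hs.exists_hasEigenvector
  have heig : (u : Fin N → ℂ) ᵥ* F = s • (u : Fin N → ℂ) := by
    have := hu.apply_eq_smul
    have h2 := congrArg (Subtype.val) this
    simpa [LinearMap.restrict_apply, Matrix.vecMulLinear_apply] using h2
  have h1 : (u : Fin N → ℂ) ᵥ* (s • (1 : Matrix (Fin N) (Fin N) ℂ) - F) = 0 := by
    rw [Matrix.vecMul_sub, heig]
    have : (u : Fin N → ℂ) ᵥ* (s • (1 : Matrix (Fin N) (Fin N) ℂ)) = s • (u : Fin N → ℂ) := by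
      funext j
      simp [Matrix.vecMul, dotProduct, Matrix.smul_apply, Matrix.one_apply,
        mul_ite, Finset.sum_ite_eq', mul_comm]
    rw [this, sub_self]
  have h2 : (u : Fin N → ℂ) ᵥ* G = 0 := by
    have := ((memU _).1 u.2) 0
    simpa using this
  have : (u : Fin N → ℂ) = 0 := hPBH s _ h1 h2
  exact hu.2 (by simpa [Submodule.coe_eq_zero] using this)

lemma kernel_trivial_real {N r : ℕ} (F : Matrix (Fin N) (Fin N) ℝ)
    (G : Matrix (Fin N) (Fin r) ℝ) (hPBH : PBH (cpx F) (cpx G))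
    (v : Fin N → ℝ) (hv : ∀ i : ℕ, v ᵥ* (F ^ i * G) = 0) : v = 0 := by
  have h := kernel_trivial_cpx (cpx F) (cpx G) hPBH (fun i => ((v i : ℂ))) ?_
  · funext i
    have := congrFun h i
    simp only [Pi.zero_apply] at this ⊢
    exact_mod_cast this
  · intro i
    rw [← cpx_pow, ← cpx_mul, cpx_vecMul, hv i]
    funext j; simp

/-- horizon-`k` reachability map. -/
noncomputable def Lmap {N r : ℕ} (F : Matrix (Fin N) (Fin N) ℝ)
    (G : Matrix (Fin N) (Fin r) ℝ) (k : ℕ) :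
    (Fin k → Fin r → ℝ) →ₗ[ℝ] (Fin N → ℝ) :=
  ∑ j : Fin k, (Matrix.mulVecLin (F ^ (j : ℕ) * G)).comp (LinearMap.proj j)

lemma Lmap_apply {N r : ℕ} (F : Matrix (Fin N) (Fin N) ℝ)
    (G : Matrix (Fin N) (Fin r) ℝ) (k : ℕ) (u : Fin k → Fin r → ℝ) :
    Lmap F G k u = ∑ j : Fin k, (F ^ (j : ℕ) * G) *ᵥ u j := by
  simp [Lmap]

lemma Lmap_mono {N r : ℕ} (F : Matrix (Fin N) (Fin N) ℝ)
    (G : Matrix (Fin N) (Fin r) ℝ) :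
    Monotone (fun k => LinearMap.range (Lmap F G k)) := by
  intro k k' hk
  rintro x ⟨u, rfl⟩
  refine ⟨fun j => if h : (j : ℕ) < k then u ⟨j, h⟩ else 0, ?_⟩
  rw [Lmap_apply, Lmap_apply]
  have hsplit : ∀ j : Fin k', (F ^ (j : ℕ) * G) *ᵥ (if h : (j : ℕ) < k then u ⟨j, h⟩ else 0)
      = if h : (j : ℕ) < k then (F ^ (j : ℕ) * G) *ᵥ u ⟨j, h⟩ else 0 := by
    intro j; split <;> simp
  simp_rw [hsplit]
  rw [← Finset.sum_subset (Finset.subset_univ (Finset.map (Fin.castLEEmb hk) Finset.univ))]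
  · rw [Finset.sum_map]
    refine Finset.sum_congr rfl fun j _ => ?_
    rw [dif_pos (by simpa using j.isLt)]
    congr 1
  · intro j _ hj
    rw [dif_neg]
    intro hlt
    exact hj (Finset.mem_map.2 ⟨⟨j, hlt⟩, Finset.mem_univ _, by simp [Fin.castLEEmb]⟩)

lemma mem_range_Lmap {N r : ℕ} (F : Matrix (Fin N) (Fin N) ℝ)
    (G : Matrix (Fin N) (Fin r) ℝ) (i : ℕ) (u : Fin r → ℝ) :
    (F ^ i * G) *ᵥ u ∈ LinearMap.range (Lmap F G (i + 1)) := by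
  refine ⟨fun j => if (j : ℕ) = i then u else 0, ?_⟩
  rw [Lmap_apply]
  rw [Finset.sum_eq_single (⟨i, Nat.lt_succ_self i⟩ : Fin (i + 1))]
  · simp
  · intro b _ hb
    have : (b : ℕ) ≠ i := fun h => hb (Fin.ext h)
    simp [this]
  · simp

lemma range_top {N r : ℕ} (F : Matrix (Fin N) (Fin N) ℝ)
    (G : Matrix (Fin N) (Fin r) ℝ) (hPBH : PBH (cpx F) (cpx G)) :
    (⨆ k : ℕ, LinearMap.range (Lmap F G k)) = ⊤ := by
  by_contra hne
  have hlt : (⨆ k : ℕ, LinearMap.range (Lmap F G k)) < ⊤ := lt_top_iff_ne_top.2 hne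
  obtain ⟨f, hf0, hker⟩ := Submodule.exists_dual_map_eq_bot_of_lt_top hlt inferInstance
  have hkill : ∀ x ∈ (⨆ k : ℕ, LinearMap.range (Lmap F G k)), f x = 0 := by
    intro x hx
    have : f x ∈ Submodule.map f (⨆ k : ℕ, LinearMap.range (Lmap F G k)) :=
      Submodule.mem_map_of_mem hx
    rwa [hker, Submodule.mem_bot] at this
  set v : Fin N → ℝ := fun i => f (Pi.single i 1) with hvdef
  have hfx : ∀ x : Fin N → ℝ, f x = ∑ i, x i * v i := by
    intro x
    conv_lhs => rw [← Finset.univ_sum_single x]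
    rw [map_sum]
    refine Finset.sum_congr rfl fun i _ => ?_
    have h1 : Pi.single i (x i) = x i • (Pi.single i 1 : Fin N → ℝ) := by
      rw [← Pi.single_smul, smul_eq_mul, mul_one]
    rw [h1, f.map_smul, smul_eq_mul]
  have hv : ∀ i : ℕ, v ᵥ* (F ^ i * G) = 0 := by
    intro i
    funext j
    have h0 : f ((F ^ i * G) *ᵥ Pi.single j 1) = 0 :=
      hkill _ (le_iSup (fun k => LinearMap.range (Lmap F G k)) (i + 1) (mem_range_Lmap F G i _))
    rw [hfx] at h0
    simp only [Matrix.mulVec_single, mul_one] at h0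
    simpa [Matrix.vecMul, dotProduct, mul_comm] using h0
  have hv0 : v = 0 := kernel_trivial_real F G hPBH v hv
  apply hf0
  refine LinearMap.ext fun x => ?_
  rw [hfx, hv0]
  simp

lemma controllable_of_pbh {N r : ℕ} (F : Matrix (Fin N) (Fin N) ℝ)
    (G : Matrix (Fin N) (Fin r) ℝ) (hPBH : PBH (cpx F) (cpx G)) :
    Controllable F G := by
  have htop := range_top F G hPBH
  have hmono := Lmap_mono F G
  have hdir : Directed (· ≤ ·) (fun k => LinearMap.range (Lmap F G k)) := hmono.directed_le
  have hsingle : ∀ j : Fin N, ∃ k,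
      (Pi.single j 1 : Fin N → ℝ) ∈ LinearMap.range (Lmap F G k) := by
    intro j
    have : (Pi.single j 1 : Fin N → ℝ) ∈ ⨆ k, LinearMap.range (Lmap F G k) :=
      htop ▸ Submodule.mem_top
    exact (Submodule.mem_iSup_of_directed _ hdir).1 this
  choose kk hkk using hsingle
  set k := max 1 (Finset.univ.sup kk) with hk
  have htopk : LinearMap.range (Lmap F G k) = ⊤ := by
    rw [eq_top_iff]
    intro x _
    have hx : x = ∑ j, Pi.single j (x j) := (Finset.univ_sum_single x).symm
    rw [hx]
    refine Submodule.sum_mem _ fun j _ => ?_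
    have h1 : Pi.single j (x j) = x j • (Pi.single j 1 : Fin N → ℝ) := by
      rw [← Pi.single_smul, smul_eq_mul, mul_one]
    rw [h1]
    exact Submodule.smul_mem _ _
      (hmono (le_trans (Finset.le_sup (Finset.mem_univ j)) (le_max_right _ _)) (hkk j))
  intro x
  have hxmem : F ^ k *ᵥ x ∈ LinearMap.range (Lmap F G k) := htopk ▸ Submodule.mem_top
  obtain ⟨w, hw⟩ := hxmem
  rw [Lmap_apply] at hw
  refine ⟨k, fun j => -(w j.rev), ?_⟩
  have hterm : ∀ j : Fin k, (F ^ (k - 1 - (j : ℕ))) *ᵥ (G *ᵥ (-(w j.rev)))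
      = -((F ^ ((j.rev : ℕ)) * G) *ᵥ w j.rev) := by
    intro j
    have hind : k - 1 - (j : ℕ) = (j.rev : ℕ) := by
      rw [Fin.val_rev]; omega
    rw [hind, Matrix.mulVec_neg, Matrix.mulVec_neg, Matrix.mulVec_mulVec]
  calc (F ^ k) *ᵥ x + ∑ j : Fin k, (F ^ (k - 1 - (j : ℕ))) *ᵥ (G *ᵥ (-(w j.rev)))
      = (F ^ k) *ᵥ x + ∑ j : Fin k, -((F ^ ((j.rev : ℕ)) * G) *ᵥ w j.rev) := by
        rw [Finset.sum_congr rfl fun j _ => hterm j]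
    _ = (F ^ k) *ᵥ x - ∑ j : Fin k, (F ^ ((j.rev : ℕ)) * G) *ᵥ w j.rev := by
        rw [Finset.sum_neg_distrib, sub_eq_add_neg]
    _ = (F ^ k) *ᵥ x - ∑ j : Fin k, (F ^ ((j : ℕ)) * G) *ᵥ w j := by
        rw [Fintype.sum_bijective Fin.rev Fin.rev_bijective _
          (fun j => (F ^ ((j : ℕ)) * G) *ᵥ w j) (fun j => rfl)]
    _ = 0 := by rw [hw, sub_self]

lemma cpx_add {a b : Type*} (M P : Matrix a b ℝ) : cpx (M + P) = cpx M + cpx P := by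
  ext i j; simp [cpx]

lemma cpx_smul {a b : Type*} (r : ℝ) (M : Matrix a b ℝ) : cpx (r • M) = (r : ℂ) • cpx M := by
  ext i j; simp [cpx]

lemma cpx_one {a : Type*} [Fintype a] [DecidableEq a] :
    cpx (1 : Matrix a a ℝ) = 1 := by
  ext i j; simp [cpx, Matrix.one_apply, apply_ite]

lemma vecMul_smul_mat {m n : Type*} [Fintype m] (v : m → ℂ) (c : ℂ) (A : Matrix m n ℂ) :
    v ᵥ* (c • A) = c • (v ᵥ* A) := by
  funext j
  simp [Matrix.vecMul, dotProduct, Finset.mul_sum, mul_left_comm]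

theorem stmt13
    (N : ℕ) (hN : 0 < N) (h a b c : ℝ) (hh : 0 < h) (ha : a ≠ 0)
    (W : Matrix (Fin N) (Fin N) ℝ)
    (δ : Fin N → ℝ) (hδ : ∀ i, δ i = 0 ∨ δ i = 1)
    (hb : b ≠ 0) (hc : c ≠ 0)
    (hPBH : PBH (cpx W) (cpx (Matrix.diagonal δ))) :
    Controllable
      (Real.exp (a * h) • (1 : Matrix (Fin N) (Fin N) ℝ) +
        ((c / a) * (Real.exp (a * h) - 1)) • W)
      (((b / a) * (Real.exp (a * h) - 1)) • Matrix.diagonal δ) := by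
  set e := Real.exp (a * h) with hedef
  set β := (c / a) * (e - 1) with hβdef
  set γ := (b / a) * (e - 1) with hγdef
  have he1 : e - 1 ≠ 0 := by
    rw [sub_ne_zero]
    intro hq
    exact (mul_ne_zero ha hh.ne') ((Real.exp_eq_one_iff _).1 hq)
  have hβ : β ≠ 0 := mul_ne_zero (div_ne_zero hc ha) he1
  have hγ : γ ≠ 0 := mul_ne_zero (div_ne_zero hb ha) he1
  have hβC : (β : ℂ) ≠ 0 := Complex.ofReal_ne_zero.2 hβ
  have hγC : (γ : ℂ) ≠ 0 := Complex.ofReal_ne_zero.2 hγ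
  apply controllable_of_pbh
  intro s v h1 h2
  set s' := (s - (e : ℂ)) / (β : ℂ) with hs'
  have hmat : s • (1 : Matrix (Fin N) (Fin N) ℂ)
      - cpx (e • (1 : Matrix (Fin N) (Fin N) ℝ) + β • W)
      = (β : ℂ) • (s' • (1 : Matrix (Fin N) (Fin N) ℂ) - cpx W) := by
    rw [cpx_add, cpx_smul, cpx_smul, cpx_one, smul_sub, smul_smul,
      mul_div_cancel₀ _ hβC, sub_smul]
    abel
  rw [hmat, vecMul_smul_mat] at h1
  have h1' : v ᵥ* (s' • (1 : Matrix (Fin N) (Fin N) ℂ) - cpx W) = 0 :=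
    (smul_eq_zero.1 h1).resolve_left hβC
  rw [cpx_smul, vecMul_smul_mat] at h2
  have h2' : v ᵥ* cpx (Matrix.diagonal δ) = 0 := (smul_eq_zero.1 h2).resolve_left hγC
  exact hPBH s' v h1' h2'
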